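/- Let π₁ be the policy defined by π₁(a) = n(a)/n(p(a)) for every a ∈ A. Then for every reduced strategy σ ∈ S and every infoset v ∈ N(σ), the sum of ln(π₁(a)) over all actions a ∈ A(σ) that are descendants of v equals −ln(n(v)). -/

import Mathlib

open scoped Classical

/-- A finite rooted tree whose internal nodes are partitioned into infosets `N`
and actions `A`: the root is an infoset, every child of an infoset is an action,
every child of an action is an infoset or a leaf, and every infoset has at
least two children.  The tree structure is given by a parent function together
with a depth function witnessing well-foundedness. -/
structure EFTree (V : Type*) [Fintype V] [DecidableEq V] where
  root : V
  parent : V → V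
  parent_root : parent root = root
  depth : V → ℕ
  depth_root : depth root = 0
  depth_parent : ∀ v : V, v ≠ root → depth v = depth (parent v) + 1
  N : Finset V
  A : Finset V
  disj : Disjoint N A
  internal_iff : ∀ v : V, (v ∈ N ∨ v ∈ A) ↔ ∃ u : V, u ≠ root ∧ parent u = v
  root_N : root ∈ N
  infoset_child : ∀ u : V, u ≠ root → parent u ∈ N → u ∈ A
  action_child : ∀ u : V, u ≠ root → parent u ∈ A → u ∉ A
  branching : ∀ v ∈ N, 1 < (Finset.univ.filter fun u => u ≠ root ∧ parent u = v).card

namespace EFTree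

variable {V : Type*} [Fintype V] [DecidableEq V] (T : EFTree V)

/-- The set `C(v)` of children of a node `v`. -/
def children (v : V) : Finset V := Finset.univ.filter fun u => u ≠ T.root ∧ T.parent u = v

/-- The set `L` of leaves: the nodes that are neither infosets nor actions. -/
def leaves : Finset V := Finset.univ \ (T.N ∪ T.A)

/-- `Desc u v` means `u` is a descendant of `v` (every node is a descendant of itself). -/
def Desc (u v : V) : Prop := ∃ k : ℕ, T.parent^[k] u = v

/-- The reachable set `V(σ)` of a (sub-)strategy `σ` started at the node `w`:
the minimal set of nodes containing `w`, containing `σ v` for every infoset `v`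
in the set, and containing all children of every action in the set. -/
def reachFrom (w : V) (σ : V → V) : Set V :=
  ⋂₀ {s : Set V | w ∈ s ∧ (∀ v ∈ T.N, v ∈ s → σ v ∈ s) ∧
      ∀ a ∈ T.A, a ∈ s → ∀ u ∈ T.children a, u ∈ s}

/-- The reachable set `V(σ)` of a strategy `σ`. -/
def reachS (σ : V → V) : Set V := T.reachFrom T.root σ

/-- `σ : V → V` canonically represents a reduced sub-strategy at the node `w`:
at every infoset in its reachable set it selects a child, and everywhere else it
is the identity (so that each reduced sub-strategy, i.e. each restriction of a
sub-strategy at `w` to the infosets it can reach, has exactly one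
representative). -/
def IsRedSubStrat (w : V) (σ : V → V) : Prop :=
  (∀ v ∈ T.N, v ∈ T.reachFrom w σ → σ v ∈ T.children v) ∧
  ∀ v : V, ¬(v ∈ T.N ∧ v ∈ T.reachFrom w σ) → σ v = v

/-- `σ : V → V` canonically represents a reduced strategy, i.e. a member of `S`. -/
def IsRedStrat (σ : V → V) : Prop := T.IsRedSubStrat T.root σ

/-- The set `A(σ) = A ∩ V(σ)` of actions reachable under a reduced (sub-)strategy. -/
noncomputable def Aset (σ : V → V) : Finset V := T.A.filter fun a => a ∈ T.reachS σ

/-- The set `A(σ) = A ∩ V(σ)` for a reduced sub-strategy at `w`. -/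
noncomputable def AsetFrom (w : V) (σ : V → V) : Finset V := T.A.filter fun a => a ∈ T.reachFrom w σ

/-- An environment chooses a child of every action. -/
def IsEnv (μ : V → V) : Prop := ∀ a ∈ T.A, μ a ∈ T.children a

/-- The reachable set `V(μ)` of an environment `μ`: the minimal set of nodes
containing the root, all children of every infoset in the set, and `μ a` for
every action `a` in the set. -/
def reachE (μ : V → V) : Set V :=
  ⋂₀ {s : Set V | T.root ∈ s ∧ (∀ v ∈ T.N, v ∈ s → ∀ u ∈ T.children v, u ∈ s) ∧
      ∀ a ∈ T.A, a ∈ s → μ a ∈ s}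

/-- `Z(μ)`: the set of actions reachable under `μ` whose chosen child is a leaf. -/
noncomputable def Zset (μ : V → V) : Finset V := T.A.filter fun a => a ∈ T.reachE μ ∧ μ a ∈ T.leaves

/-- A policy assigns to each action a probability in `[0,1]`, summing to one
over the children of each infoset. -/
def IsPolicy (π : V → ℝ) : Prop :=
  (∀ a ∈ T.A, 0 ≤ π a ∧ π a ≤ 1) ∧ ∀ v ∈ T.N, ∑ a ∈ T.children v, π a = 1

/-- The root-to-leaf path traversed when the reduced strategy `σ` is played
against the environment `μ`: the minimal set of nodes containing the root,
containing `σ v` for every infoset `v` in the set, and `μ a` for every action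
`a` in the set. -/
def playPath (σ μ : V → V) : Set V :=
  ⋂₀ {s : Set V | T.root ∈ s ∧ (∀ v ∈ T.N, v ∈ s → σ v ∈ s) ∧
      ∀ a ∈ T.A, a ∈ s → μ a ∈ s}

/-- `z` is the last action node on the play path of `(σ, μ)`: it is an action on
the path of which every other action on the path is an ancestor. -/
def IsLastAction (σ μ : V → V) (z : V) : Prop :=
  z ∈ T.A ∧ z ∈ T.playPath σ μ ∧ ∀ a ∈ T.A, a ∈ T.playPath σ μ → T.Desc z a

end EFTree

namespace EFTree

variable {V : Type*} [Fintype V] [DecidableEq V] (T : EFTree V)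

lemma mem_children' {u v : V} : u ∈ T.children v ↔ u ≠ T.root ∧ T.parent u = v := by
  simp [children]

lemma iterate_root' (k : ℕ) : T.parent^[k] T.root = T.root :=
  Function.iterate_fixed T.parent_root k

lemma depth_iterate' {v : V} : ∀ i, i ≤ T.depth v → T.depth (T.parent^[i] v) = T.depth v - i := by
  intro i
  induction i with
  | zero => simp
  | succ k ih =>
    intro hk
    have hk' : k ≤ T.depth v := Nat.le_of_succ_le hk
    have hdw : T.depth (T.parent^[k] v) = T.depth v - k := ih hk'
    have hne : T.parent^[k] v ≠ T.root := by
      intro h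
      rw [h, T.depth_root] at hdw
      omega
    have h2 := T.depth_parent _ hne
    rw [Function.iterate_succ_apply']
    omega

lemma depth_lt_card' (v : V) : T.depth v < Fintype.card V := by
  have h : (Finset.range (T.depth v + 1)).card ≤ (Finset.univ : Finset V).card := by
    apply Finset.card_le_card_of_injOn (fun i => T.parent^[i] v)
    · intro i _; exact Finset.mem_univ _
    · intro i hi j hj hij
      simp only [Finset.coe_range, Set.mem_Iio, Finset.mem_coe, Finset.mem_range] at hi hj
      have h1 := T.depth_iterate' (v := v) i (by omega)
      have h2 := T.depth_iterate' (v := v) j (by omega)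
      simp only at hij
      rw [hij] at h1
      omega
  simpa using h

lemma depth_desc' : ∀ (k : ℕ) (a u : V), T.parent^[k] a = u → u ≠ T.root →
    T.depth a = T.depth u + k := by
  intro k
  induction k with
  | zero => intro a u h _; simp only [Function.iterate_zero_apply] at h; rw [h]; ring
  | succ k ih =>
    intro a u h hu
    rw [Function.iterate_succ_apply'] at h
    set w := T.parent^[k] a with hw
    have hwne : w ≠ T.root := by
      intro hr; rw [hr, T.parent_root] at h; exact hu h.symm
    have h1 := ih a w rfl hwne
    have h2 := T.depth_parent w hwne
    rw [h] at h2
    omega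

lemma mem_Aset' {σ : V → V} {a : V} : a ∈ T.Aset σ ↔ a ∈ T.A ∧ a ∈ T.reachS σ := by
  simp [Aset]

lemma reach_root' (σ : V → V) : T.root ∈ T.reachS σ := by
  intro s hs; exact hs.1

lemma reach_sigma' (σ : V → V) {v : V} (hv : v ∈ T.N) (hr : v ∈ T.reachS σ) :
    σ v ∈ T.reachS σ := by
  intro s hs; exact hs.2.1 v hv (hr s hs)

lemma reach_children' (σ : V → V) {a u : V} (ha : a ∈ T.A) (hr : a ∈ T.reachS σ)
    (hu : u ∈ T.children a) : u ∈ T.reachS σ := by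
  intro s hs; exact hs.2.2 a ha (hr s hs) u hu

lemma reach_min' (σ : V → V) {s : Set V} (h1 : T.root ∈ s)
    (h2 : ∀ v ∈ T.N, v ∈ s → σ v ∈ s)
    (h3 : ∀ a ∈ T.A, a ∈ s → ∀ u ∈ T.children a, u ∈ s) : T.reachS σ ⊆ s :=
  Set.sInter_subset_of_mem ⟨h1, h2, h3⟩

lemma reach_parent' (σ : V → V) (hσ : T.IsRedStrat σ) :
    ∀ u ∈ T.reachS σ, u ≠ T.root →
      T.parent u ∈ T.reachS σ ∧ (T.parent u ∈ T.N → u = σ (T.parent u)) := by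
  set s : Set V := {u | u ∈ T.reachS σ ∧ (u = T.root ∨
    (T.parent u ∈ T.reachS σ ∧ (T.parent u ∈ T.N → u = σ (T.parent u))))} with hs
  have hsub : T.reachS σ ⊆ s := by
    apply T.reach_min' σ
    · exact ⟨T.reach_root' σ, Or.inl rfl⟩
    · intro v hvN hvs
      have hvr : v ∈ T.reachS σ := hvs.1
      have hσr : σ v ∈ T.reachS σ := T.reach_sigma' σ hvN hvr
      have hσc : σ v ∈ T.children v := hσ.1 v hvN hvr
      rw [T.mem_children'] at hσc
      refine ⟨hσr, Or.inr ⟨?_, ?_⟩⟩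
      · rw [hσc.2]; exact hvr
      · intro _; rw [hσc.2]
    · intro a haA has u hu
      have har : a ∈ T.reachS σ := has.1
      have hur : u ∈ T.reachS σ := T.reach_children' σ haA har hu
      rw [T.mem_children'] at hu
      refine ⟨hur, Or.inr ⟨?_, ?_⟩⟩
      · rw [hu.2]; exact har
      · intro hN; rw [hu.2] at hN
        exact absurd hN (Finset.disjoint_right.mp T.disj haA)
  intro u hu hne
  rcases hsub hu with ⟨_, h | h⟩
  · exact absurd h hne
  · exact h

lemma reach_iterate' (σ : V → V) (hσ : T.IsRedStrat σ) {u : V} (hu : u ∈ T.reachS σ) :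
    ∀ k, T.parent^[k] u ∈ T.reachS σ := by
  intro k
  induction k with
  | zero => simpa using hu
  | succ k ih =>
    rw [Function.iterate_succ_apply']
    by_cases h : T.parent^[k] u = T.root
    · rw [h, T.parent_root]; exact T.reach_root' σ
    · exact (T.reach_parent' σ hσ _ ih h).1

lemma n_pos' (n : V → ℕ)
    (hnA : ∀ a ∈ T.A, n a = ∏ v ∈ (T.children a).filter (· ∈ T.N), n v)
    (hnN : ∀ v ∈ T.N, n v = ∑ a ∈ T.children v, n a) :
    ∀ v : V, v ∈ T.N ∨ v ∈ T.A → 0 < n v := by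
  suffices h : ∀ m : ℕ, ∀ v : V, Fintype.card V ≤ T.depth v + m → v ∈ T.N ∨ v ∈ T.A → 0 < n v by
    intro v hv; exact h (Fintype.card V) v (by omega) hv
  intro m
  induction m with
  | zero =>
    intro v h _
    exact absurd h (by have := T.depth_lt_card' v; omega)
  | succ k ih =>
    intro v h hv
    have hchild : ∀ u ∈ T.children v, Fintype.card V ≤ T.depth u + k := by
      intro u hu
      rw [T.mem_children'] at hu
      have := T.depth_parent u hu.1
      rw [hu.2] at this
      omega
    rcases hv with hN | hA
    · rw [hnN v hN]
      apply Finset.sum_pos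
      · intro a ha
        have haA : a ∈ T.A := by
          rw [T.mem_children'] at ha
          exact T.infoset_child a ha.1 (by rw [ha.2]; exact hN)
        exact ih a (hchild a ha) (Or.inr haA)
      · have hb := T.branching v hN
        have : 0 < (T.children v).card := by
          rw [children]; omega
        exact Finset.card_pos.mp this
    · rw [hnA v hA]
      apply Finset.prod_pos
      intro u hu
      rw [Finset.mem_filter] at hu
      exact ih u (hchild u hu.1) (Or.inl hu.2)

end EFTree
theorem stmt9 {V : Type*} [Fintype V] [DecidableEq V] (T : EFTree V)
    (n : V → ℕ)
    (hnA : ∀ a ∈ T.A, n a = ∏ v ∈ (T.children a).filter (· ∈ T.N), n v)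
    (hnN : ∀ v ∈ T.N, n v = ∑ a ∈ T.children v, n a)
    (σ : V → V) (hσ : T.IsRedStrat σ) :
    ∀ v ∈ T.N, v ∈ T.reachS σ →
      ∑ a ∈ (T.Aset σ).filter (fun a => T.Desc a v),
        Real.log ((n a : ℝ) / (n (T.parent a) : ℝ)) = -Real.log (n v : ℝ) := by
  have hpos := T.n_pos' n hnA hnN
  suffices h : ∀ m : ℕ, ∀ v : V, Fintype.card V ≤ T.depth v + m → v ∈ T.N → v ∈ T.reachS σ →
      ∑ a ∈ (T.Aset σ).filter (fun a => T.Desc a v),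
        Real.log ((n a : ℝ) / (n (T.parent a) : ℝ)) = -Real.log (n v : ℝ) by
    intro v hvN hvr; exact h (Fintype.card V) v (by omega) hvN hvr
  intro m
  induction m using Nat.strong_induction_on with
  | _ m ih =>
  intro v hm hvN hvr
  have hσc : σ v ∈ T.children v := hσ.1 v hvN hvr
  have hσc' := (T.mem_children').mp hσc
  set a0 := σ v with ha0def
  have ha0A : a0 ∈ T.A := T.infoset_child a0 hσc'.1 (by rw [hσc'.2]; exact hvN)
  have ha0r : a0 ∈ T.reachS σ := T.reach_sigma' σ hvN hvr
  have ha0d : T.depth a0 = T.depth v + 1 := by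
    have := T.depth_parent a0 hσc'.1; rw [hσc'.2] at this; omega
  set U := (T.children a0).filter (· ∈ T.N) with hU
  set F : V → Finset V := fun u => (T.Aset σ).filter (fun a => T.Desc a u) with hF
  have hUmem : ∀ u ∈ U, u ≠ T.root ∧ T.parent u = a0 ∧ u ∈ T.N ∧ u ∈ T.reachS σ ∧
      T.depth u = T.depth v + 2 := by
    intro u hu
    rw [hU, Finset.mem_filter] at hu
    have h1 := (T.mem_children').mp hu.1
    have hr : u ∈ T.reachS σ := T.reach_children' σ ha0A ha0r hu.1
    have hd := T.depth_parent u h1.1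
    rw [h1.2] at hd
    exact ⟨h1.1, h1.2, hu.2, hr, by omega⟩
  have hdecomp : F v = insert a0 (U.biUnion F) := by
    ext a
    simp only [Finset.mem_insert, Finset.mem_biUnion]
    constructor
    · intro ha
      rw [hF, Finset.mem_filter] at ha
      obtain ⟨haS, hk⟩ := ha
      rw [T.mem_Aset'] at haS
      obtain ⟨haA, har⟩ := haS
      have hav : a ≠ v := fun h => Finset.disjoint_right.mp T.disj haA (h ▸ hvN)
      have hex : ∃ k, T.parent^[k] a = v := hk
      set k0 := Nat.find hex with hk0
      have hspec : T.parent^[k0] a = v := Nat.find_spec hex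
      have hk0pos : 1 ≤ k0 := by
        rcases Nat.eq_zero_or_pos k0 with h | h
        · rw [h] at hspec; simp at hspec; exact absurd hspec hav
        · exact h
      set c := T.parent^[k0 - 1] a with hc
      have hpc : T.parent c = v := by
        have hh := Function.iterate_succ_apply' T.parent (k0 - 1) a
        rw [hc, ← hh, Nat.succ_eq_add_one, show k0 - 1 + 1 = k0 by omega]
        exact hspec
      have hcne : c ≠ T.root := by
        intro h
        have hv0 : v = T.root := by rw [← hpc, h, T.parent_root]
        have hcv : T.parent^[k0 - 1] a = v := by rw [← hc, h, hv0]
        exact absurd hcv (Nat.find_min hex (by omega))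
      have hcr : c ∈ T.reachS σ := T.reach_iterate' σ hσ har (k0 - 1)
      have hca0 : c = a0 := by
        have h2 := (T.reach_parent' σ hσ c hcr hcne).2
        rw [hpc] at h2
        exact h2 hvN
      rcases Nat.lt_or_ge k0 2 with h2 | h2
      · left
        have hk1 : k0 = 1 := by omega
        rw [← hca0, hc, hk1]
        simp
      · right
        set d := T.parent^[k0 - 2] a with hd
        have hpd : T.parent d = a0 := by
          have hh := Function.iterate_succ_apply' T.parent (k0 - 2) a
          rw [hd, ← hh, Nat.succ_eq_add_one, show k0 - 2 + 1 = k0 - 1 by omega, ← hc, hca0]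
        have hdne : d ≠ T.root := by
          intro h
          apply hcne
          rw [hc, show k0 - 1 = (k0 - 2) + 1 by omega, Function.iterate_succ_apply', ← hd, h,
            T.parent_root]
        have hdchild : d ∈ T.children a0 := (T.mem_children').mpr ⟨hdne, hpd⟩
        have hdnA : d ∉ T.A := T.action_child d hdne (by rw [hpd]; exact ha0A)
        have hdr : d ∈ T.reachS σ := T.reach_iterate' σ hσ har (k0 - 2)
        have had : a ≠ d := fun h => hdnA (h ▸ haA)
        have hk2 : 1 ≤ k0 - 2 := by
          rcases Nat.eq_zero_or_pos (k0 - 2) with h | h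
          · rw [h] at hd; simp at hd; exact absurd hd.symm had
          · exact h
        have hdN : d ∈ T.N := by
          have he : T.parent (T.parent^[k0 - 3] a) = d := by
            have hh := Function.iterate_succ_apply' T.parent (k0 - 3) a
            rw [← hh, Nat.succ_eq_add_one, show k0 - 3 + 1 = k0 - 2 by omega, ← hd]
          have hene : T.parent^[k0 - 3] a ≠ T.root := by
            intro h; apply hdne; rw [← he, h, T.parent_root]
          have hint := (T.internal_iff d).mpr ⟨T.parent^[k0 - 3] a, hene, he⟩
          tauto
        refine ⟨d, ?_, ?_⟩
        · rw [hU, Finset.mem_filter]; exact ⟨hdchild, hdN⟩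
        · rw [hF, Finset.mem_filter, T.mem_Aset']
          exact ⟨⟨haA, har⟩, ⟨k0 - 2, hd.symm⟩⟩
    · intro ha
      rw [hF, Finset.mem_filter, T.mem_Aset']
      rcases ha with h | ⟨u, huU, hau⟩
      · subst h
        refine ⟨⟨ha0A, ha0r⟩, ⟨1, ?_⟩⟩
        simp [hσc'.2]
      · obtain ⟨hune, hpu, huN, hur, hud⟩ := hUmem u huU
        rw [hF, Finset.mem_filter] at hau
        have h1 := hau.1
        rw [T.mem_Aset'] at h1
        obtain ⟨j, hj⟩ := hau.2
        refine ⟨h1, ⟨2 + j, ?_⟩⟩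
        rw [Function.iterate_add_apply, hj]
        show T.parent (T.parent u) = v
        rw [hpu, hσc'.2]
  have hnotmem : a0 ∉ U.biUnion F := by
    intro h
    rw [Finset.mem_biUnion] at h
    obtain ⟨u, huU, hmem⟩ := h
    obtain ⟨hune, hpu, huN, hur, hud⟩ := hUmem u huU
    rw [hF, Finset.mem_filter] at hmem
    obtain ⟨j, hj⟩ := hmem.2
    have := T.depth_desc' j a0 u hj hune
    omega
  have hdisj : (U : Set V).PairwiseDisjoint F := by
    intro u hu u' hu' hne
    simp only [Finset.mem_coe] at hu hu'
    rw [Function.onFun, Finset.disjoint_left]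
    intro a ha ha'
    obtain ⟨hune, hpu, huN, hur, hud⟩ := hUmem u hu
    obtain ⟨hune', hpu', huN', hur', hud'⟩ := hUmem u' hu'
    rw [hF, Finset.mem_filter] at ha ha'
    obtain ⟨j, hj⟩ := ha.2
    obtain ⟨j', hj'⟩ := ha'.2
    have h1 := T.depth_desc' j a u hj hune
    have h2 := T.depth_desc' j' a u' hj' hune'
    have hjj : j = j' := by omega
    exact hne (by rw [← hj, ← hj', hjj])
  have hIH : ∀ u ∈ U, ∑ a ∈ F u, Real.log ((n a : ℝ) / (n (T.parent a) : ℝ))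
      = -Real.log (n u : ℝ) := by
    intro u hu
    obtain ⟨hune, hpu, huN, hur, hud⟩ := hUmem u hu
    have hdlt := T.depth_lt_card' u
    exact ih (m - 2) (by omega) u (by omega) huN hur
  have hna0 : (0:ℝ) < (n a0 : ℝ) := by exact_mod_cast hpos a0 (Or.inr ha0A)
  have hnv : (0:ℝ) < (n v : ℝ) := by exact_mod_cast hpos v (Or.inl hvN)
  have hprod : (n a0 : ℝ) = ∏ u ∈ U, (n u : ℝ) := by
    rw [hnA a0 ha0A]; push_cast; rfl
  have hlogprod : Real.log (n a0 : ℝ) = ∑ u ∈ U, Real.log (n u : ℝ) := by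
    rw [hprod]
    exact Real.log_prod (fun u hu =>
      ne_of_gt (by exact_mod_cast hpos u (Or.inl (hUmem u hu).2.2.1)))
  show ∑ a ∈ F v, Real.log ((n a : ℝ) / (n (T.parent a) : ℝ)) = -Real.log (n v : ℝ)
  rw [hdecomp, Finset.sum_insert hnotmem, Finset.sum_biUnion hdisj,
    Finset.sum_congr rfl hIH, hσc'.2,
    Real.log_div (ne_of_gt hna0) (ne_of_gt hnv), hlogprod]
  rw [Finset.sum_neg_distrib]
  ring
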